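/- Let K ⊆ ℝⁿ be closed and nonempty. Let ε_θ : ℝⁿ × ℝ_{>0} → ℝⁿ be a (0,1)-approximate projection, meaning: for every x ∈ ℝⁿ having a unique projection p onto K and every σ > 0 with dist_K(x) = √n·σ, one has x − σ·ε_θ(x, σ) = p. Let 0 < σ₀ < σ₁ < … < σ_N, let x_N ∈ ℝⁿ satisfy dist_K(x_N) = √n·σ_N, and define the DDIM iterates x_{t−1} = x_t + (σ_{t−1} − σ_t)·ε_θ(x_t, σ_t) for t = N, N−1, …, 1. Assume each x_t for t = N, …, 1 has a unique projection p_t onto K. Then for every t ∈ {0, 1, …, N}, dist_K(x_t) = √n·σ_t, and for every t ∈ {1, …, N}, x_{t−1} = x_t − β_t·(x_t − p_t) where β_t = 1 − σ_{t−1}/σ_t. -/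

import Mathlib

/-- Under a `(0,1)`-approximate (i.e. exact) projection denoiser, the DDIM
iterates are exact gradient descent on `½·dist_K²` with step sizes `β_t = 1 − σ_{t−1}/σ_t`,
and `dist_K(x_t) = √n·σ_t` at every step. -/
theorem stmt_6 {n : ℕ} (K : Set (EuclideanSpace ℝ (Fin n))) (hKc : IsClosed K)
    (hKne : K.Nonempty)
    (εθ : EuclideanSpace ℝ (Fin n) → ℝ → EuclideanSpace ℝ (Fin n))
    -- ε_θ is a (0,1)-approximate projection:
    (hεθ : ∀ (y : EuclideanSpace ℝ (Fin n)) (s : ℝ), 0 < s →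
      ∀ q : EuclideanSpace ℝ (Fin n),
        (q ∈ K ∧ dist y q = Metric.infDist y K ∧
          ∀ q' ∈ K, dist y q' = Metric.infDist y K → q' = q) →
        Metric.infDist y K = Real.sqrt n * s →
        y - s • εθ y s = q)
    (N : ℕ) (σ : ℕ → ℝ) (hσ0 : 0 < σ 0)
    (hσmono : ∀ t, t < N → σ t < σ (t + 1))
    (x : ℕ → EuclideanSpace ℝ (Fin n))
    (hinit : Metric.infDist (x N) K = Real.sqrt n * σ N)
    (hiter : ∀ t, 1 ≤ t → t ≤ N →
      x (t - 1) = x t + (σ (t - 1) - σ t) • εθ (x t) (σ t))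
    (p : ℕ → EuclideanSpace ℝ (Fin n))
    (hproj : ∀ t, 1 ≤ t → t ≤ N →
      p t ∈ K ∧ dist (x t) (p t) = Metric.infDist (x t) K ∧
        ∀ q' ∈ K, dist (x t) q' = Metric.infDist (x t) K → q' = p t) :
    (∀ t, t ≤ N → Metric.infDist (x t) K = Real.sqrt n * σ t) ∧
      (∀ t, 1 ≤ t → t ≤ N →
        x (t - 1) = x t - (1 - σ (t - 1) / σ t) • (x t - p t)) := by
  have σpos : ∀ t, t ≤ N → 0 < σ t := by
    intro t
    induction t with
    | zero => intro _; exact hσ0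
    | succ k ih =>
      intro hk
      have hkN : k < N := by omega
      exact lt_trans (ih (by omega)) (hσmono k hkN)
  have key : ∀ t, 1 ≤ t → t ≤ N → Metric.infDist (x t) K = Real.sqrt n * σ t →
      Metric.infDist (x (t - 1)) K = Real.sqrt n * σ (t - 1) ∧
      x (t - 1) = x t - (1 - σ (t - 1) / σ t) • (x t - p t) := by
    intro t ht1 htN hd
    obtain ⟨hpK, hpd, _⟩ := hproj t ht1 htN
    have hpos : 0 < σ t := σpos t htN
    have hprev_lt : σ (t - 1) < σ t := by
      have := hσmono (t - 1) (by omega)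
      rwa [Nat.sub_add_cancel ht1] at this
    have hprevpos : 0 < σ (t - 1) := σpos (t - 1) (by omega)
    have hε : x t - σ t • εθ (x t) (σ t) = p t :=
      hεθ (x t) (σ t) hpos (p t) (hproj t ht1 htN) hd
    have hsmul : σ t • εθ (x t) (σ t) = x t - p t := by
      rw [← hε]; abel
    have hεval : εθ (x t) (σ t) = (σ t)⁻¹ • (x t - p t) := by
      rw [← hsmul, smul_smul, inv_mul_cancel₀ hpos.ne', one_smul]
    have hrec : x (t - 1) = x t - (1 - σ (t - 1) / σ t) • (x t - p t) := by
      rw [hiter t ht1 htN, hεval, smul_smul]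
      have hc : (σ (t - 1) - σ t) * (σ t)⁻¹ = -(1 - σ (t - 1) / σ t) := by
        field_simp
        ring
      rw [hc, neg_smul, ← sub_eq_add_neg]
    refine ⟨?_, hrec⟩
    have hnorm_tp : ‖x t - p t‖ = Real.sqrt n * σ t := by
      rw [← dist_eq_norm, hpd, hd]
    have hdiff : x (t - 1) - p t = (σ (t - 1) / σ t) • (x t - p t) := by
      rw [hrec, sub_smul, one_smul]
      abel
    have hd1 : dist (x (t - 1)) (p t) = Real.sqrt n * σ (t - 1) := by
      rw [dist_eq_norm, hdiff, norm_smul, hnorm_tp, Real.norm_eq_abs,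
        abs_of_pos (div_pos hprevpos hpos)]
      field_simp
    have hub : Metric.infDist (x (t - 1)) K ≤ Real.sqrt n * σ (t - 1) :=
      hd1 ▸ Metric.infDist_le_dist_of_mem hpK
    have hdiff2 : x t - x (t - 1) = (1 - σ (t - 1) / σ t) • (x t - p t) := by
      rw [hrec]; abel
    have hdist_xt : dist (x t) (x (t - 1)) = Real.sqrt n * (σ t - σ (t - 1)) := by
      rw [dist_eq_norm, hdiff2, norm_smul, hnorm_tp, Real.norm_eq_abs,
        abs_of_pos (by rw [sub_pos]; exact (div_lt_one hpos).mpr hprev_lt)]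
      field_simp
    have htri : Metric.infDist (x t) K ≤ Metric.infDist (x (t - 1)) K + dist (x t) (x (t - 1)) :=
      Metric.infDist_le_infDist_add_dist
    rw [hdist_xt, hd] at htri
    have hsq : (0:ℝ) ≤ Real.sqrt n := Real.sqrt_nonneg n
    nlinarith [htri, hub]
  have hdist : ∀ t, t ≤ N → Metric.infDist (x t) K = Real.sqrt n * σ t := by
    have H : ∀ k, k ≤ N → Metric.infDist (x (N - k)) K = Real.sqrt n * σ (N - k) := by
      intro k
      induction k with
      | zero => intro _; simpa using hinit
      | succ m ih =>
        intro hm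
        have h1 := ih (by omega)
        have h2 := (key (N - m) (by omega) (by omega) h1).1
        have heq : N - (m + 1) = (N - m) - 1 := by omega
        rw [heq]
        exact h2
    intro t ht
    have := H (N - t) (by omega)
    rwa [Nat.sub_sub_self ht] at this
  exact ⟨hdist, fun t ht1 htN => (key t ht1 htN (hdist t htN)).2⟩
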